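/- For N ≥ 3 the S-matrix S^T has a simple bound-state pole at θ = 2πi/N: the limit of (θ − 2πi/N)·S^T(θ) as θ → 2πi/N (θ ≠ 2πi/N) exists and equals 2i·sin(2π/N)·sin(πB/(2N))·sin(π(2−B)/(2N)) / (sin(π(2+B)/(2N))·sin(π(4−B)/(2N))). -/

import Mathlib

open Complex Topology Filter

/-- The two-particle S-matrix of the `Z_N`-Ising model. -/
noncomputable def SZ (N : ℕ) (θ : ℂ) : ℂ :=
  Complex.sinh ((θ + 2 * (Real.pi : ℂ) * I / N) / 2) /
    Complex.sinh ((θ - 2 * (Real.pi : ℂ) * I / N) / 2)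

/-- The two-particle S-matrix of the affine `A_{N-1}`-Toda model. -/
noncomputable def SToda (N : ℕ) (B : ℝ) (θ : ℂ) : ℂ :=
  SZ N θ *
    (Complex.sinh ((θ - I * (Real.pi : ℂ) * (B : ℂ) / N) / 2) /
      Complex.sinh ((θ + I * (Real.pi : ℂ) * (B : ℂ) / N) / 2)) *
    (Complex.sinh ((θ - I * (Real.pi : ℂ) * (2 - (B : ℂ)) / N) / 2) /
      Complex.sinh ((θ + I * (Real.pi : ℂ) * (2 - (B : ℂ)) / N) / 2))

/-- For `N ≥ 3` the S-matrix `S^T` has a simple bound-state pole at `θ = 2πi/N` with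
residue `2i·sin(2π/N)·sin(πB/(2N))·sin(π(2−B)/(2N)) / (sin(π(2+B)/(2N))·sin(π(4−B)/(2N)))`. -/
theorem SToda_boundstate_pole (N : ℕ) (hN : 3 ≤ N) (B : ℝ) (hB0 : 0 < B) (hB2 : B < 2) :
    Tendsto (fun θ : ℂ => (θ - 2 * (Real.pi : ℂ) * I / N) * SToda N B θ)
      (𝓝[≠] (2 * (Real.pi : ℂ) * I / N))
      (𝓝 (2 * I * Complex.sin (2 * (Real.pi : ℂ) / N) *
        Complex.sin ((Real.pi : ℂ) * (B : ℂ) / (2 * N)) *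
        Complex.sin ((Real.pi : ℂ) * (2 - (B : ℂ)) / (2 * N)) /
        (Complex.sin ((Real.pi : ℂ) * (2 + (B : ℂ)) / (2 * N)) *
          Complex.sin ((Real.pi : ℂ) * (4 - (B : ℂ)) / (2 * N))))) := by
  have hNpos : (0:ℝ) < N := by exact_mod_cast Nat.lt_of_lt_of_le (by norm_num) hN
  have hNC : (N:ℂ) ≠ 0 := by exact_mod_cast hNpos.ne'
  set a : ℂ := 2 * (Real.pi : ℂ) * I / N with ha
  -- slope limit
  have hslope : Tendsto (fun w : ℂ => Complex.sinh w / w) (𝓝[≠] (0:ℂ)) (𝓝 1) := by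
    have h := Complex.hasDerivAt_sinh 0
    rw [hasDerivAt_iff_tendsto_slope] at h
    simpa [slope_fun_def, Complex.sinh_zero, Complex.cosh_zero, div_eq_inv_mul] using h
  have hinv : Tendsto (fun w : ℂ => w / Complex.sinh w) (𝓝[≠] (0:ℂ)) (𝓝 1) := by
    simpa [inv_div] using hslope.inv₀ one_ne_zero
  have hmap : Tendsto (fun θ : ℂ => (θ - a) / 2) (𝓝[≠] a) (𝓝[≠] (0:ℂ)) := by
    apply tendsto_nhdsWithin_of_tendsto_nhds_of_eventually_within
    · have : ContinuousAt (fun θ : ℂ => (θ - a) / 2) a :=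
        (continuousAt_id.sub continuousAt_const).div_const 2
      simpa using this.tendsto.mono_left nhdsWithin_le_nhds
    · filter_upwards [self_mem_nhdsWithin] with θ hθ
      simp only [Set.mem_compl_iff, Set.mem_singleton_iff] at hθ ⊢
      simp [div_eq_zero_iff, sub_eq_zero, hθ]
  have h1 : Tendsto (fun θ : ℂ => (θ - a) / Complex.sinh ((θ - a) / 2)) (𝓝[≠] a) (𝓝 2) := by
    have h := (hinv.comp hmap).const_mul (2:ℂ)
    simp only [Function.comp] at h
    refine h.congr' (Eventually.of_forall fun θ => ?_) |>.mono_right (by norm_num)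
    ring
  -- the regular factor
  set g : ℂ → ℂ := fun θ =>
    Complex.sinh ((θ + a) / 2) *
      (Complex.sinh ((θ - I * (Real.pi : ℂ) * (B : ℂ) / N) / 2) /
        Complex.sinh ((θ + I * (Real.pi : ℂ) * (B : ℂ) / N) / 2)) *
      (Complex.sinh ((θ - I * (Real.pi : ℂ) * (2 - (B : ℂ)) / N) / 2) /
        Complex.sinh ((θ + I * (Real.pi : ℂ) * (2 - (B : ℂ)) / N) / 2)) with hg
  -- evaluate the special points
  have e0 : (a + a) / 2 = ((2 * Real.pi / N : ℝ) : ℂ) * I := by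
    rw [ha]; push_cast; field_simp; ring
  have e1 : (a - I * (Real.pi : ℂ) * (B : ℂ) / N) / 2
      = ((Real.pi * (2 - B) / (2 * N) : ℝ) : ℂ) * I := by
    rw [ha]; push_cast; field_simp
  have e2 : (a + I * (Real.pi : ℂ) * (B : ℂ) / N) / 2
      = ((Real.pi * (2 + B) / (2 * N) : ℝ) : ℂ) * I := by
    rw [ha]; push_cast; field_simp
  have e3 : (a - I * (Real.pi : ℂ) * (2 - (B : ℂ)) / N) / 2
      = ((Real.pi * B / (2 * N) : ℝ) : ℂ) * I := by
    rw [ha]; push_cast; field_simp; ring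
  have e4 : (a + I * (Real.pi : ℂ) * (2 - (B : ℂ)) / N) / 2
      = ((Real.pi * (4 - B) / (2 * N) : ℝ) : ℂ) * I := by
    rw [ha]; push_cast; field_simp; ring
  -- nonvanishing of the denominators
  have hpi := Real.pi_pos
  have hN3 : (3:ℝ) ≤ N := by exact_mod_cast hN
  have hsin : ∀ x : ℝ, 0 < x → x < 2 * N → Complex.sin ((Real.pi * x / (2 * N) : ℝ) : ℂ) ≠ 0 := by
    intro x hx hx'
    rw [← Complex.ofReal_sin, Ne, Complex.ofReal_eq_zero]
    refine (Real.sin_pos_of_pos_of_lt_pi ?_ ?_).ne'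
    · positivity
    · rw [div_lt_iff₀ (by positivity)]
      nlinarith
  have hs2 : Complex.sin ((Real.pi * (2 + B) / (2 * N) : ℝ) : ℂ) ≠ 0 :=
    hsin _ (by linarith) (by linarith)
  have hs4 : Complex.sin ((Real.pi * (4 - B) / (2 * N) : ℝ) : ℂ) ≠ 0 :=
    hsin _ (by linarith) (by linarith)
  have hd2 : Complex.sinh ((a + I * (Real.pi : ℂ) * (B : ℂ) / N) / 2) ≠ 0 := by
    rw [e2, Complex.sinh_mul_I]
    exact mul_ne_zero hs2 I_ne_zero
  have hd4 : Complex.sinh ((a + I * (Real.pi : ℂ) * (2 - (B : ℂ)) / N) / 2) ≠ 0 := by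
    rw [e4, Complex.sinh_mul_I]
    exact mul_ne_zero hs4 I_ne_zero
  -- continuity of g at a
  have h2 : Tendsto g (𝓝[≠] a) (𝓝 (g a)) := by
    have : ContinuousAt g a := by
      apply ContinuousAt.mul
      apply ContinuousAt.mul
      · exact (Complex.continuous_sinh.comp ((continuous_id.add continuous_const).div_const 2)).continuousAt
      · exact ContinuousAt.div
          (Complex.continuous_sinh.comp ((continuous_id.sub continuous_const).div_const 2)).continuousAt
          (Complex.continuous_sinh.comp ((continuous_id.add continuous_const).div_const 2)).continuousAt hd2
      · exact ContinuousAt.div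
          (Complex.continuous_sinh.comp ((continuous_id.sub continuous_const).div_const 2)).continuousAt
          (Complex.continuous_sinh.comp ((continuous_id.add continuous_const).div_const 2)).continuousAt hd4
    exact this.continuousWithinAt.tendsto
  -- combine
  have hcomb := h1.mul h2
  have heq : ∀ θ : ℂ, (θ - a) * SToda N B θ
      = ((θ - a) / Complex.sinh ((θ - a) / 2)) * g θ := by
    intro θ
    simp only [hg, SToda, SZ, ← ha]
    ring
  have hval : (2 : ℂ) * g a
      = 2 * I * Complex.sin (2 * (Real.pi : ℂ) / N) *
        Complex.sin ((Real.pi : ℂ) * (B : ℂ) / (2 * N)) *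
        Complex.sin ((Real.pi : ℂ) * (2 - (B : ℂ)) / (2 * N)) /
        (Complex.sin ((Real.pi : ℂ) * (2 + (B : ℂ)) / (2 * N)) *
          Complex.sin ((Real.pi : ℂ) * (4 - (B : ℂ)) / (2 * N))) := by
    simp only [hg, e0, e1, e2, e3, e4, Complex.sinh_mul_I]
    push_cast
    rw [show ((2:ℂ) * Real.pi / N) = 2 * (Real.pi : ℂ) / N from rfl]
    push_cast at hs2 hs4
    field_simp
  refine Tendsto.congr (fun θ => (heq θ).symm) ?_
  rw [← hval]
  exact hcomb
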